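/- A site s i is non-degenerate if and only if s i is an interior point of its own cell, i.e., s i ∈ interior (Vor i). -/

import Mathlib

/-- The additively weighted Voronoi cell of the site `s i` with weights `w`:
the set of points whose weighted distance to `s i` is at most the weighted
distance to every other site. -/
def vorCell {V : Type*} [NormedAddCommGroup V] {ι : Type*}
    (s : ι → V) (w : ι → ℝ) (i : ι) : Set V :=
  {p : V | ∀ j, ‖p - s i‖ + w i ≤ ‖p - s j‖ + w j}

/-- A site `s i` is degenerate if it belongs to the Voronoi cell of another site. -/
def IsDegenerateSite {V : Type*} [NormedAddCommGroup V] {ι : Type*}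
    (s : ι → V) (w : ι → ℝ) (i : ι) : Prop :=
  ∃ j, j ≠ i ∧ s i ∈ vorCell s w j

/-- A site is non-degenerate if and only if it is an interior point of its own
Voronoi cell. -/
theorem nondegenerate_iff_mem_interior_vorCell
    {V : Type*} [NormedAddCommGroup V] [NormedSpace ℝ V]
    (hdim : Module.finrank ℝ V = 2) [StrictConvexSpace ℝ V]
    {ι : Type*} [Finite ι]
    (s : ι → V) (hs : Function.Injective s) (w : ι → ℝ) (i : ι) :
    ¬ IsDegenerateSite s w i ↔ s i ∈ interior (vorCell s w i) := by
  classical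
  constructor
  · intro hnd
    have key : ∀ j, j ≠ i → w i < ‖s i - s j‖ + w j := by
      intro j hj
      by_contra hle
      push_neg at hle
      have : Nonempty ι := ⟨i⟩
      obtain ⟨k, hk⟩ := Finite.exists_min (fun k => ‖s i - s k‖ + w k)
      by_cases hki : k = i
      · refine hnd ⟨j, hj, fun l => ?_⟩
        have h1 : w i ≤ ‖s i - s l‖ + w l := by simpa [hki] using hk l
        exact hle.trans h1
      · exact hnd ⟨k, hki, hk⟩
    refine mem_interior.mpr ⟨⋂ j, (if j = i then Set.univ
      else {p | ‖p - s i‖ + w i < ‖p - s j‖ + w j}), ?_, ?_, ?_⟩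
    · intro p hp j
      by_cases hj : j = i
      · subst hj; exact le_rfl
      · have := Set.mem_iInter.mp hp j
        rw [if_neg hj] at this
        exact this.le
    · refine isOpen_iInter_of_finite fun j => ?_
      split_ifs
      · exact isOpen_univ
      · exact isOpen_lt (by fun_prop) (by fun_prop)
    · refine Set.mem_iInter.mpr fun j => ?_
      by_cases hj : j = i
      · simp [hj]
      · rw [if_neg hj]
        simpa using key j hj
  · intro hint hdeg
    obtain ⟨j, hj, hmem⟩ := hdeg
    have hji : ‖s i - s j‖ + w j ≤ w i := by simpa using hmem i
    have hd : 0 < ‖s j - s i‖ := by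
      rw [norm_pos_iff, sub_ne_zero]
      exact fun h => hj (hs h)
    set d := ‖s j - s i‖ with hdef
    obtain ⟨ε, hε, hsub⟩ := Metric.mem_nhds_iff.mp (mem_interior_iff_mem_nhds.mp hint)
    set t := min (ε / 2) (d / 2) with ht
    have htpos : 0 < t := lt_min (by linarith) (by linarith)
    have htd : t ≤ d / 2 := min_le_right _ _
    set p := s i + (t / d) • (s j - s i) with hp
    have hpi : ‖p - s i‖ = t := by
      rw [hp]
      simp only [add_sub_cancel_left, norm_smul, Real.norm_eq_abs]
      rw [abs_of_nonneg (by positivity), ← hdef, div_mul_cancel₀ _ hd.ne']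
    have hpj : ‖p - s j‖ = d - t := by
      have h1 : p - s j = (t / d - 1) • (s j - s i) := by
        rw [hp, sub_smul, one_smul]; abel
      rw [h1, norm_smul, Real.norm_eq_abs, ← hdef,
        abs_of_nonpos (by rw [sub_nonpos, div_le_one hd]; linarith)]
      field_simp
      ring
    have hpball : p ∈ Metric.ball (s i) ε := by
      rw [Metric.mem_ball, dist_eq_norm, hpi]
      exact lt_of_le_of_lt (min_le_left _ _) (by linarith)
    have hcell := hsub hpball j
    rw [hpi, hpj] at hcell
    have hdij : ‖s i - s j‖ = d := by rw [hdef, norm_sub_rev]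
    rw [hdij] at hji
    linarith
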